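/- For n = 2, the operator □₁ is self-adjoint for the bilinear form (f,g)_q = CT(f g^♣ (1-x₁/x₂)/(1-qx₁/x₂)): for all Laurent polynomials f, g in x₁, x₂, ((f)□₁, g)_q = (f, (g)□₁)_q. -/

import Mathlib

open scoped Classical

/-- Laurent polynomials in two variables `x₁, x₂` over `K`. -/
abbrev Laurent2 (K : Type*) [CommRing K] := AddMonoidAlgebra K (ℤ × ℤ)

/-- The kernel `(1 - x₁/x₂)/(1 - q x₁/x₂)` expanded as a power series in `u = x₁/x₂`. -/
noncomputable def theta2 {K : Type*} [Field K] (q : K) : PowerSeries K :=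
  (1 - PowerSeries.X) * (1 - PowerSeries.C q * PowerSeries.X)⁻¹

/-- The constant term `CT(x₁^m x₂^p · θ)` (coefficient of `x₁⁰` then of `x₂⁰`). -/
noncomputable def ctMono {K : Type*} [Field K] (q : K) (m p : ℤ) : K :=
  if p = -m ∧ 0 ≤ -m then PowerSeries.coeff (-m).toNat (theta2 q) else 0

/-- The scalar product `(f, g)_q = CT(f g^♣ θ)`; `♣` sends `x₁ ↦ 1/x₂`, `x₂ ↦ 1/x₁`,
so the monomials `x₁^a x₂^b` of `f` and `x₁^c x₂^d` of `g` contribute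
`CT(x₁^{a-d} x₂^{b-c} θ)`. -/
noncomputable def pairing2 {K : Type*} [Field K] (q : K) (f g : Laurent2 K) : K :=
  Finsupp.sum f.coeff fun v cv => Finsupp.sum g.coeff fun w cw =>
    cv * cw * ctMono q (v.1 - w.2) (v.2 - w.1)

/-- The swap `f ↦ f^{s₁}` of `x₁` and `x₂` on Laurent polynomials. -/
noncomputable def swap2 {K : Type*} [CommRing K] (f : Laurent2 K) : Laurent2 K :=
  AddMonoidAlgebra.ofCoeff (Finsupp.mapDomain (Prod.swap) f.coeff)

namespace BoxAux

variable {K : Type*} [Field K]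

/-- The generic "weighted constant term" functional. -/
noncomputable def Phi (c : ℤ × ℤ → K) : Laurent2 K →ₗ[K] K :=
  Finsupp.linearCombination K c ∘ₗ (AddMonoidAlgebra.coeffLinearEquiv K).toLinearMap

lemma Phi_single (c : ℤ × ℤ → K) (v : ℤ × ℤ) (a : K) :
    Phi c (AddMonoidAlgebra.single v a) = a * c v :=
  (Finsupp.linearCombination_single (R := K) (v := c) a v).trans (smul_eq_mul ..)

lemma Phi_mul (c : ℤ × ℤ → K) (f h : Laurent2 K) :
    Phi c (f * h) = Finsupp.sum f.coeff fun v a => Finsupp.sum h.coeff fun w b => a * b * c (v + w) := by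
  rw [AddMonoidAlgebra.mul_def, map_finsuppSum]
  refine Finsupp.sum_congr fun v _ => ?_
  rw [map_finsuppSum]
  exact Finsupp.sum_congr fun w _ => Phi_single c (v + w) (f.coeff v * h.coeff w)

/-- The exponent map of the ♣ involution. -/
def clubHom : (ℤ × ℤ) →+ (ℤ × ℤ) where
  toFun v := (-v.2, -v.1)
  map_zero' := by simp
  map_add' v w := by simp [Prod.ext_iff]; constructor <;> ring

/-- The ♣ involution as a ring homomorphism. -/
noncomputable def clubs : Laurent2 K →+* Laurent2 K :=
  AddMonoidAlgebra.mapDomainRingHom K clubHom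

lemma clubs_apply (f : Laurent2 K) : clubs f = AddMonoidAlgebra.ofCoeff (Finsupp.mapDomain (fun v => (-v.2, -v.1)) f.coeff) := rfl

lemma clubs_single (v : ℤ × ℤ) (a : K) :
    clubs (AddMonoidAlgebra.single v a) = AddMonoidAlgebra.single (-v.2, -v.1) a := by
  rw [clubs_apply]; exact congrArg AddMonoidAlgebra.ofCoeff Finsupp.mapDomain_single

/-- The exponent map of the swap. -/
def swapHom : (ℤ × ℤ) →+ (ℤ × ℤ) where
  toFun := Prod.swap
  map_zero' := rfl
  map_add' _ _ := rfl

lemma swap2_eq (f : Laurent2 K) :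
    swap2 f = AddMonoidAlgebra.mapDomainRingHom K (swapHom) f := rfl

lemma swap2_mul (f h : Laurent2 K) : swap2 (f * h) = swap2 f * swap2 h := by
  simp only [swap2_eq, map_mul]

lemma swap2_clubs (f : Laurent2 K) : swap2 (clubs f) = clubs (swap2 f) := by
  simp only [swap2, clubs_apply, AddMonoidAlgebra.coeff_ofCoeff, ← Finsupp.mapDomain_comp]
  rfl

lemma swap2_apply_zero (f : Laurent2 K) : (swap2 f).coeff 0 = f.coeff 0 :=
  Finsupp.mapDomain_apply Prod.swap_injective f.coeff 0

lemma swap2_swap2 (f : Laurent2 K) : swap2 (swap2 f) = f := by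
  simp only [swap2, AddMonoidAlgebra.coeff_ofCoeff, ← Finsupp.mapDomain_comp, Prod.swap_swap_eq, Finsupp.mapDomain_id, AddMonoidAlgebra.ofCoeff_coeff]

lemma geom_inv (q : K) :
    (PowerSeries.mk fun n => q^n) = (1 - PowerSeries.C q * PowerSeries.X)⁻¹ := by
  rw [PowerSeries.eq_inv_iff_mul_eq_one]
  · ext n
    rw [mul_sub, mul_one, map_sub, mul_comm (PowerSeries.mk fun n => q^n), mul_assoc]
    cases n with
    | zero => simp
    | succ n =>
      rw [PowerSeries.coeff_C_mul, PowerSeries.coeff_succ_X_mul, PowerSeries.coeff_mk,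
        PowerSeries.coeff_mk, pow_succ, mul_comm]
      simp
  · simp

lemma coeff_theta2_zero (q : K) : PowerSeries.coeff 0 (theta2 q) = 1 := by
  rw [theta2, ← geom_inv, sub_mul, one_mul]
  simp

lemma coeff_theta2_succ (q : K) (n : ℕ) :
    PowerSeries.coeff (n + 1) (theta2 q) = q ^ (n + 1) - q ^ n := by
  rw [theta2, ← geom_inv, sub_mul, one_mul, map_sub, PowerSeries.coeff_mk,
    PowerSeries.coeff_succ_X_mul, PowerSeries.coeff_mk]

/-- The weight of the functional `h ↦ CT(h·θ)`. -/
noncomputable def Ec (q : K) : ℤ × ℤ → K := fun v => ctMono q v.1 v.2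

/-- The weight of the functional `h ↦ CT(h·θ/(x₁-x₂)) = CT(-h·x₂⁻¹/(1-q x₁/x₂))`. -/
noncomputable def Fc (q : K) : ℤ × ℤ → K := fun v =>
  if v.2 = 1 - v.1 ∧ v.1 ≤ 0 then -(q ^ (-v.1).toNat) else 0

lemma key1 (q : K) (m p : ℤ) : ctMono q m p = Fc q (m + 1, p) - Fc q (m, p + 1) := by
  rw [ctMono, Fc, Fc]
  dsimp only
  by_cases hp : p = -m
  · subst hp
    by_cases hm : m ≤ 0
    · rcases eq_or_lt_of_le hm with h0 | hneg
      · subst h0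
        norm_num [coeff_theta2_zero]
      · have h1 : m + 1 ≤ 0 := by omega
        have h2 : (0:ℤ) ≤ -m := by omega
        rw [if_pos ⟨rfl, h2⟩, if_pos ⟨by ring, h1⟩, if_pos ⟨by ring, hm⟩]
        obtain ⟨k, hk⟩ : ∃ k : ℕ, (-m).toNat = k + 1 := ⟨(-m).toNat - 1, by omega⟩
        have hk2 : (-(m + 1)).toNat = k := by omega
        rw [hk, hk2, coeff_theta2_succ]
        ring
    · rw [if_neg (by omega), if_neg (by push_neg; intro _; omega),
        if_neg (by push_neg; intro _; omega)]
      ring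
  · rw [if_neg (by tauto), if_neg (by push_neg; intro h; omega),
      if_neg (by push_neg; intro h; omega)]
    ring

lemma key2 (q : K) (m p : ℤ) :
    q * Fc q (m + 1, p) - Fc q (m, p + 1) = if (m, p) = ((0:ℤ), (0:ℤ)) then 1 else 0 := by
  rw [Fc, Fc]
  dsimp only
  by_cases hp : p = -m
  · subst hp
    by_cases hm : m ≤ 0
    · rcases eq_or_lt_of_le hm with h0 | hneg
      · subst h0
        norm_num
      · have h1 : m + 1 ≤ 0 := by omega
        rw [if_pos ⟨by ring, h1⟩, if_pos ⟨by ring, hm⟩, if_neg (by simp [Prod.ext_iff]; omega)]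
        obtain ⟨k, hk⟩ : ∃ k : ℕ, (-m).toNat = k + 1 := ⟨(-m).toNat - 1, by omega⟩
        have hk2 : (-(m + 1)).toNat = k := by omega
        rw [hk, hk2, pow_succ]
        ring
    · rw [if_neg (by push_neg; intro _; omega), if_neg (by push_neg; intro _; omega),
        if_neg (by simp [Prod.ext_iff]; omega)]
      ring
  · rw [if_neg (by push_neg; intro h; omega), if_neg (by push_neg; intro h; omega),
      if_neg (by simp [Prod.ext_iff]; omega)]
    ring

/-- Division of the kernel by `x₁ - x₂`:
`CT(D·θ) = CT(D·(x₁-x₂)·θ/(x₁-x₂))` for every Laurent polynomial `D`. -/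
lemma L3 (q : K) (D : Laurent2 K) :
    Phi (Ec q) D
      = Phi (Fc q) (D * (AddMonoidAlgebra.single ((1:ℤ),(0:ℤ)) (1:K)
          - AddMonoidAlgebra.single ((0:ℤ),(1:ℤ)) (1:K))) := by
  induction D using AddMonoidAlgebra.induction_linear with
  | zero => simp
  | add f g hf hg => rw [add_mul, map_add, map_add, hf, hg]
  | single v a =>
    rw [mul_sub, map_sub]
    rw [show (AddMonoidAlgebra.single v a : Laurent2 K) * AddMonoidAlgebra.single ((1:ℤ),(0:ℤ)) (1:K)
        = AddMonoidAlgebra.single (v + (1,0)) a by rw [AddMonoidAlgebra.single_mul_single, mul_one]]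
    rw [show (AddMonoidAlgebra.single v a : Laurent2 K) * AddMonoidAlgebra.single ((0:ℤ),(1:ℤ)) (1:K)
        = AddMonoidAlgebra.single (v + (0,1)) a by rw [AddMonoidAlgebra.single_mul_single, mul_one]]
    rw [Phi_single, Phi_single, Phi_single, ← mul_sub]
    have e1 : v + ((1:ℤ),(0:ℤ)) = (v.1 + 1, v.2) := by simp [Prod.ext_iff]
    have e2 : v + ((0:ℤ),(1:ℤ)) = (v.1, v.2 + 1) := by simp [Prod.ext_iff]
    rw [e1, e2]
    congr 1
    exact key1 q v.1 v.2

/-- Telescoping: `CT((q x₁ - x₂)·S·θ/(x₁-x₂))` is the constant coefficient of `S`. -/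
lemma step4 (q : K) (S : Laurent2 K) :
    Phi (Fc q) ((AddMonoidAlgebra.single ((1:ℤ),(0:ℤ)) q
        - AddMonoidAlgebra.single ((0:ℤ),(1:ℤ)) (1:K)) * S) = S.coeff 0 := by
  induction S using AddMonoidAlgebra.induction_linear with
  | zero => simp
  | add f g hf hg => rw [mul_add, map_add, hf, hg]; simp
  | single v a =>
    rw [sub_mul]
    rw [show (AddMonoidAlgebra.single ((1:ℤ),(0:ℤ)) q : Laurent2 K) * AddMonoidAlgebra.single v a
        = AddMonoidAlgebra.single ((1,0) + v) (q * a) from AddMonoidAlgebra.single_mul_single ..]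
    rw [show (AddMonoidAlgebra.single ((0:ℤ),(1:ℤ)) (1:K) : Laurent2 K) * AddMonoidAlgebra.single v a
        = AddMonoidAlgebra.single ((0,1) + v) (1 * a) from AddMonoidAlgebra.single_mul_single ..]
    rw [map_sub, Phi_single, Phi_single, one_mul]
    have e1 : ((1:ℤ),(0:ℤ)) + v = (v.1 + 1, v.2) := by simp [Prod.ext_iff]; omega
    have e2 : ((0:ℤ),(1:ℤ)) + v = (v.1, v.2 + 1) := by simp [Prod.ext_iff]; omega
    rw [e1, e2]
    have hfold : q * a * Fc q (v.1 + 1, v.2) - a * Fc q (v.1, v.2 + 1)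
        = a * (q * Fc q (v.1 + 1, v.2) - Fc q (v.1, v.2 + 1)) := by ring
    rw [hfold, key2, AddMonoidAlgebra.coeff_single_apply]
    by_cases hv : v = 0
    · subst hv; simp
    · rw [if_neg (by simpa [Prod.ext_iff] using hv), if_neg (by simpa [eq_comm] using hv)]
      simp

/-- The pairing as a weighted constant term of `f · g^♣`. -/
lemma pairing_eq (q : K) (f g : Laurent2 K) :
    pairing2 q f g = Phi (Ec q) (f * clubs g) := by
  rw [Phi_mul, pairing2]
  refine Finsupp.sum_congr fun v _ => ?_
  rw [clubs_apply, AddMonoidAlgebra.coeff_ofCoeff]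
  rw [Finsupp.sum_mapDomain_index (fun w => by ring) (fun w b₁ b₂ => by ring)]
  refine Finsupp.sum_congr fun w _ => ?_
  have : v + ((-w.2, -w.1) : ℤ × ℤ) = (v.1 - w.2, v.2 - w.1) := by simp [Prod.ext_iff]; omega
  rw [Ec, this]

end BoxAux

open BoxAux in
/-- for `n = 2`, the operator `□₁` (acting on the right,
`(f)□₁ = ∂₁((x₁ - qx₂)f)`, characterized by `((f)□₁)·(x₁-x₂) = (x₁-qx₂)f - (x₂-qx₁)f^{s₁}`)
is self-adjoint for the bilinear form `(f,g)_q = CT(f g^♣ (1-x₁/x₂)/(1-qx₁/x₂))`: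
`((f)□₁, g)_q = (f, (g)□₁)_q`. -/
theorem box_self_adjoint {K : Type*} [Field K] (q : K) (f g Bf Bg : Laurent2 K)
    (X1 X2 : Laurent2 K)
    (hX1 : X1 = AddMonoidAlgebra.single ((1 : ℤ), (0 : ℤ)) (1 : K))
    (hX2 : X2 = AddMonoidAlgebra.single ((0 : ℤ), (1 : ℤ)) (1 : K))
    (hBf : Bf * (X1 - X2)
        = (X1 - (AddMonoidAlgebra.single 0 q) * X2) * f
          - (X2 - (AddMonoidAlgebra.single 0 q) * X1) * swap2 f)
    (hBg : Bg * (X1 - X2)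
        = (X1 - (AddMonoidAlgebra.single 0 q) * X2) * g
          - (X2 - (AddMonoidAlgebra.single 0 q) * X1) * swap2 g) :
    pairing2 q Bf g = pairing2 q f Bg := by
  classical
  set cq : Laurent2 K := AddMonoidAlgebra.single 0 q with hcq
  set G : Laurent2 K := clubs g with hG
  set BG : Laurent2 K := clubs Bg with hBG
  set U : Laurent2 K := AddMonoidAlgebra.single ((1:ℤ),(1:ℤ)) (1:K) with hU
  -- images of X1, X2 under ♣, multiplied back by x₁x₂
  have hU1 : clubs (AddMonoidAlgebra.single ((1:ℤ),(0:ℤ)) (1:K)) * U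
      = AddMonoidAlgebra.single ((1:ℤ),(0:ℤ)) (1:K) := by
    rw [clubs_single, hU, AddMonoidAlgebra.single_mul_single, mul_one]
    congr 1
  have hU2 : clubs (AddMonoidAlgebra.single ((0:ℤ),(1:ℤ)) (1:K)) * U
      = AddMonoidAlgebra.single ((0:ℤ),(1:ℤ)) (1:K) := by
    rw [clubs_single, hU, AddMonoidAlgebra.single_mul_single, mul_one]
    congr 1
  have hcq' : clubs cq = cq := by
    rw [hcq, clubs_single]
    norm_num
    rfl
  -- the ♣-transported relation for Bg
  have hclubsBg : BG * (X1 - X2) = (X1 - cq * X2) * G - (X2 - cq * X1) * swap2 G := by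
    have h := congrArg (clubs (K := K)) hBg
    simp only [map_mul, map_sub] at h
    rw [← swap2_clubs, ← hG, ← hBG, hcq', hX1, hX2] at h
    rw [hX1, hX2, ← hU1, ← hU2]
    linear_combination U * h
  -- the difference of the two sides, before dividing by x₁ - x₂
  set S : Laurent2 K := swap2 f * G - f * swap2 G with hS
  have hD : Bf * G * (X1 - X2) = f * BG * (X1 - X2) + (cq * X1 - X2) * S := by
    rw [hS]
    linear_combination G * hBf - f * hclubsBg
  -- the constant coefficient of S vanishes
  have hzero : S.coeff 0 = 0 := by
    have h1 := swap2_apply_zero (swap2 f * G)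
    rw [swap2_mul, swap2_swap2] at h1
    rw [hS, AddMonoidAlgebra.coeff_sub, Finsupp.sub_apply, ← h1, sub_self]
  -- assemble
  have hfactor : (cq * X1 - X2)
      = AddMonoidAlgebra.single ((1:ℤ),(0:ℤ)) q - AddMonoidAlgebra.single ((0:ℤ),(1:ℤ)) (1:K) := by
    rw [hcq, hX1, hX2, AddMonoidAlgebra.single_mul_single, mul_one]
    norm_num
  calc pairing2 q Bf g = Phi (Ec q) (Bf * G) := by rw [pairing_eq, hG]
    _ = Phi (Fc q) (Bf * G * (X1 - X2)) := by rw [L3 q (Bf * G), hX1, hX2]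
    _ = Phi (Fc q) (f * BG * (X1 - X2)) + Phi (Fc q) ((cq * X1 - X2) * S) := by
        rw [hD, map_add]
    _ = Phi (Fc q) (f * BG * (X1 - X2)) := by
        rw [hfactor, step4, hzero, add_zero]
    _ = Phi (Ec q) (f * BG) := by rw [L3 q (f * BG), hX1, hX2]
    _ = pairing2 q f Bg := by rw [pairing_eq, hBG]
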